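/- Let X = (I,P) be a probabilistic coherence space and let t : Mfin(I) → [0,∞) satisfy Σ_μ t_μ x^μ ≤ 1 for all x ∈ P. Let p ∈ [0,1), let x ≤ y ∈ P (pointwise) with ‖y‖_X ≤ p, and define h : [0,1] → [0,1] by h(θ) = Σ_μ t_μ (x+θ(y−x))^μ. Then h is well defined and differentiable on [0,1] (one-sidedly at the endpoints), with h'(θ) = Σ_{a∈I} Dt(x+θ(y−x))_a (y−x)_a for all θ ∈ [0,1], where Dt(z)_a = Σ_μ (μ(a)+1) t_{μ+[a]} z^μ. -/

import Mathlib

open scoped ENNReal NNReal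

noncomputable section

/-- ⟨u,u'⟩ = Σ_i u_i u'_i in [0,∞]. -/
def dotE {I : Type*} (u v : I → ℝ≥0∞) : ℝ≥0∞ := ∑' i, u i * v i

/-- The orthogonal P⊥ of a set P ⊆ [0,∞]^I. -/
def orthE {I : Type*} (P : Set (I → ℝ≥0∞)) : Set (I → ℝ≥0∞) :=
  {v | ∀ u ∈ P, dotE u v ≤ 1}

/-- (I,P) is a probabilistic coherence space. -/
structure IsPCS {I : Type*} (P : Set (I → ℝ≥0∞)) : Prop where
  biorth : orthE (orthE P) = P
  nonzero : ∀ a, ∃ x ∈ P, 0 < x a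
  bounded : ∀ a, ∃ m : ℝ≥0, ∀ x ∈ P, x a ≤ (m : ℝ≥0∞)

/-- The norm ‖x‖_X = inf{r > 0 | x ∈ rP}. -/
def pnorm {I : Type*} (P : Set (I → ℝ≥0∞)) (x : I → ℝ≥0∞) : ℝ≥0∞ :=
  sInf {r : ℝ≥0∞ | 0 < r ∧ ∃ z ∈ P, x = r • z}

/-- x^μ = Π_{a∈I} x_a^{μ(a)}. -/
def mpow {I : Type*} (x : I → ℝ≥0∞) (μ : Multiset I) : ℝ≥0∞ := (μ.map x).prod

/-- The derivative Dt(z)_a = Σ_μ (μ(a)+1) t_{μ+[a]} z^μ of a scalar power series. -/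
def matDeriv1 {I : Type*} [DecidableEq I] (t : Multiset I → ℝ≥0∞)
    (z : I → ℝ≥0∞) : I → ℝ≥0∞ :=
  fun a => ∑' μ : Multiset I, ((μ.count a : ℝ≥0∞) + 1) * t (μ + {a}) * mpow z μ

/-- The segment z(θ) = x + θ(y−x). -/
def zseg {I : Type*} (x y : I → ℝ≥0∞) (θ : ℝ) : I → ℝ≥0∞ :=
  fun a => x a + ENNReal.ofReal θ * (y a - x a)

/-- h(θ) = Σ_μ t_μ (x+θ(y−x))^μ, as a real-valued function. -/
def hseg {I : Type*} (t : Multiset I → ℝ≥0∞) (x y : I → ℝ≥0∞) (θ : ℝ) : ℝ :=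
  (∑' μ : Multiset I, t μ * mpow (zseg x y θ) μ).toReal

section Aux

variable {I : Type*}

lemma aux_mpow_cons (z : I → ℝ≥0∞) (a : I) (μ : Multiset I) :
    mpow z (a ::ₘ μ) = z a * mpow z μ := by
  rw [mpow, Multiset.map_cons, Multiset.prod_cons]; rfl

lemma aux_mpow_mono {z z' : I → ℝ≥0∞} (h : ∀ a, z a ≤ z' a) (μ : Multiset I) :
    mpow z μ ≤ mpow z' μ := by
  induction μ using Multiset.induction with
  | empty => simp [mpow]
  | cons a μ ih => rw [aux_mpow_cons, aux_mpow_cons]; exact mul_le_mul' (h a) ih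

lemma aux_mpow_ne_top {z : I → ℝ≥0∞} (h : ∀ a, z a ≠ ⊤) (μ : Multiset I) : mpow z μ ≠ ⊤ := by
  induction μ using Multiset.induction with
  | empty => simp [mpow]
  | cons a μ ih => rw [aux_mpow_cons]; exact ENNReal.mul_ne_top (h a) ih

lemma aux_mpow_toReal {z : I → ℝ≥0∞} (h : ∀ a, z a ≠ ⊤) (μ : Multiset I) :
    (mpow z μ).toReal = (μ.map fun a => (z a).toReal).prod := by
  induction μ using Multiset.induction with
  | empty => simp [mpow]
  | cons a μ ih =>
    rw [aux_mpow_cons, Multiset.map_cons, Multiset.prod_cons, ENNReal.toReal_mul, ih]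

lemma aux_mpow_smul (c : ℝ≥0∞) (z : I → ℝ≥0∞) (μ : Multiset I) :
    mpow (fun a => c * z a) μ = c ^ (Multiset.card μ) * mpow z μ := by
  induction μ using Multiset.induction with
  | empty => simp [mpow]
  | cons a μ ih =>
    rw [aux_mpow_cons, aux_mpow_cons, ih, Multiset.card_cons, pow_succ]
    ring

lemma aux_msum_ne_top {F : I → ℝ≥0∞} {μ : Multiset I} (h : ∀ a ∈ μ, F a ≠ ⊤) :
    (μ.map F).sum ≠ ⊤ := by
  induction μ using Multiset.induction with
  | empty => simp
  | cons a μ ih =>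
    rw [Multiset.map_cons, Multiset.sum_cons]
    exact ENNReal.add_ne_top.mpr ⟨h a (Multiset.mem_cons_self a μ),
      ih fun b hb => h b (Multiset.mem_cons_of_mem hb)⟩

lemma aux_msum_toReal {F : I → ℝ≥0∞} {μ : Multiset I} (h : ∀ a ∈ μ, F a ≠ ⊤) :
    ((μ.map F).sum).toReal = (μ.map fun a => (F a).toReal).sum := by
  induction μ using Multiset.induction with
  | empty => simp
  | cons a μ ih =>
    rw [Multiset.map_cons, Multiset.sum_cons, Multiset.map_cons, Multiset.sum_cons,
      ENNReal.toReal_add (h a (Multiset.mem_cons_self a μ))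
        (aux_msum_ne_top fun b hb => h b (Multiset.mem_cons_of_mem hb)),
      ih fun b hb => h b (Multiset.mem_cons_of_mem hb)]

lemma aux_msum_eq_tsum [DecidableEq I] (μ : Multiset I) (F : I → ℝ≥0∞) :
    (μ.map F).sum = ∑' a, (μ.count a : ℝ≥0∞) * F a := by
  induction μ using Multiset.induction with
  | empty => simp
  | cons a μ ih =>
    rw [Multiset.map_cons, Multiset.sum_cons, ih]
    have h : ∀ b, ((a ::ₘ μ).count b : ℝ≥0∞) * F b
        = (if b = a then F b else 0) + (μ.count b : ℝ≥0∞) * F b := by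
      intro b
      by_cases hb : b = a
      · subst hb; rw [Multiset.count_cons_self, if_pos rfl]; push_cast; ring
      · rw [Multiset.count_cons_of_ne hb, if_neg hb, zero_add]
    have h2 : ∑' b, ((a ::ₘ μ).count b : ℝ≥0∞) * F b
        = ∑' b, ((if b = a then F b else 0) + (μ.count b : ℝ≥0∞) * F b) := tsum_congr h
    rw [h2]
    rw [ENNReal.tsum_add]
    have h3 : ∑' b, (if b = a then F b else 0) = F a :=
      (tsum_eq_single a (fun b hb => if_neg hb)).trans (if_pos rfl)
    rw [h3]

lemma aux_abs_mprod_le (μ : Multiset I) (g W : I → ℝ) (h : ∀ b ∈ μ, |g b| ≤ W b) :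
    |(μ.map g).prod| ≤ (μ.map W).prod := by
  induction μ using Multiset.induction with
  | empty => simp
  | cons a μ ih =>
    rw [Multiset.map_cons, Multiset.prod_cons, Multiset.map_cons, Multiset.prod_cons, abs_mul]
    exact mul_le_mul (h a (Multiset.mem_cons_self a μ))
      (ih fun b hb => h b (Multiset.mem_cons_of_mem hb)) (abs_nonneg _)
      ((abs_nonneg _).trans (h a (Multiset.mem_cons_self a μ)))

lemma aux_abs_msum_le (μ : Multiset I) (g W : I → ℝ) (h : ∀ b ∈ μ, |g b| ≤ W b) :
    |(μ.map g).sum| ≤ (μ.map W).sum := by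
  induction μ using Multiset.induction with
  | empty => simp
  | cons a μ ih =>
    rw [Multiset.map_cons, Multiset.sum_cons, Multiset.map_cons, Multiset.sum_cons]
    exact (abs_add_le _ _).trans (add_le_add (h a (Multiset.mem_cons_self a μ))
      (ih fun b hb => h b (Multiset.mem_cons_of_mem hb)))

lemma aux_hasDerivAt_mprod [DecidableEq I] (X D : I → ℝ) (μ : Multiset I) (θ : ℝ) :
    HasDerivAt (fun θ' => (μ.map fun a => X a + θ' * D a).prod)
      ((μ.map fun a => D a * ((μ.erase a).map fun b => X b + θ * D b).prod).sum) θ := by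
  induction μ using Multiset.induction with
  | empty => simpa using hasDerivAt_const θ (1:ℝ)
  | cons a μ ih =>
    have h1 : HasDerivAt (fun θ' : ℝ => X a + θ' * D a) (D a) θ := by
      simpa using (hasDerivAt_mul_const (D a)).const_add (X a)
    have h2 := h1.mul ih
    have hfun : (fun θ' => ((a ::ₘ μ).map fun b => X b + θ' * D b).prod)
        = fun θ' => (X a + θ' * D a) * ((μ.map fun b => X b + θ' * D b)).prod := by
      funext θ'; rw [Multiset.map_cons, Multiset.prod_cons]
    rw [hfun]
    convert h2 using 1
    · rfl
    · rfl
    · rfl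
    rw [Multiset.map_cons, Multiset.sum_cons, Multiset.erase_cons_head]
    congr 1
    rw [← Multiset.sum_map_mul_left]
    refine congrArg Multiset.sum (Multiset.map_congr rfl fun b hb => ?_)
    have he : (a ::ₘ μ).erase b = a ::ₘ μ.erase b := by
      by_cases hba : b = a
      · subst hba
        rw [Multiset.erase_cons_head]
        exact (Multiset.cons_erase hb).symm
      · exact Multiset.erase_cons_tail μ (fun h => hba h.symm)
    rw [he, Multiset.map_cons, Multiset.prod_cons]
    ring

end Aux

def auxF {I : Type*} (t : Multiset I → ENNReal) (X D : I → ℝ) (μ : Multiset I) (θ : ℝ) : ℝ :=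
  (t μ).toReal * (μ.map fun a => X a + θ * D a).prod

def auxF' {I : Type*} [DecidableEq I] (t : Multiset I → ENNReal) (X D : I → ℝ)
    (μ : Multiset I) (θ : ℝ) : ℝ :=
  (t μ).toReal * (μ.map fun a => D a * ((μ.erase a).map fun b => X b + θ * D b).prod).sum

/-- For t : !X ⊸ 1, p ∈ [0,1), x ≤ y ∈ P, ‖y‖_X ≤ p, the function
h(θ) = Σ_μ t_μ (x+θ(y−x))^μ maps [0,1] into [0,1] and is differentiable on [0,1]
(one-sidedly at the endpoints), with h'(θ) = Σ_a Dt(x+θ(y−x))_a (y−x)_a. -/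
theorem stmt10 {I : Type*} [Countable I] [DecidableEq I]
    (P : Set (I → ℝ≥0∞)) (hP : IsPCS P)
    (t : Multiset I → ℝ≥0∞) (htfin : ∀ μ, t μ ≠ ⊤)
    (ht : ∀ z ∈ P, ∑' μ : Multiset I, t μ * mpow z μ ≤ 1)
    (p : ℝ≥0∞) (hp : p < 1)
    (x y : I → ℝ≥0∞) (hx : x ∈ P) (hy : y ∈ P) (hxy : x ≤ y)
    (hyp : pnorm P y ≤ p) :
    (∀ θ ∈ Set.Icc (0:ℝ) 1, hseg t x y θ ∈ Set.Icc (0:ℝ) 1) ∧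
    ∀ θ ∈ Set.Icc (0:ℝ) 1,
      HasDerivWithinAt (hseg t x y)
        ((∑' a : I, matDeriv1 t (zseg x y θ) a * (y a - x a)).toReal)
        (Set.Icc (0:ℝ) 1) θ := by
  classical
  -- P is downward closed
  have Pdown : ∀ v w : I → ℝ≥0∞, (∀ a, w a ≤ v a) → v ∈ P → w ∈ P := by
    intro v w hwv hv
    rw [← hP.biorth] at hv ⊢
    intro u hu
    refine le_trans ?_ (hv u hu)
    exact ENNReal.tsum_le_tsum fun i => mul_le_mul_right (hwv i) (u i)
  have hfin : ∀ v ∈ P, ∀ a, v a ≠ ⊤ := by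
    intro v hv a
    obtain ⟨m, hm⟩ := hP.bounded a
    exact ne_top_of_le_ne_top ENNReal.coe_ne_top (hm v hv)
  -- extract r and zt with y = r • zt, r < 1
  have h1 : pnorm P y < 1 := lt_of_le_of_lt hyp hp
  rw [pnorm] at h1
  obtain ⟨r, ⟨hr0, zt, hztP, hyzt⟩, hr1⟩ := sInf_lt_iff.mp h1
  have hyr : ∀ a, y a = r * zt a := fun a => by rw [hyzt]; rfl
  -- real parameters
  set R : ℝ≥0∞ := max r (1/2) with hRdef
  have hR1 : R < 1 := max_lt hr1 (by norm_num)
  have hRtop : R ≠ ⊤ := ne_top_of_lt hR1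
  have hR0 : R ≠ 0 := by
    refine ne_of_gt (lt_of_lt_of_le ?_ (le_max_right _ _))
    norm_num
  have hρ0 : 0 < R.toReal := ENNReal.toReal_pos hR0 hRtop
  have hρ1 : R.toReal < 1 := by
    have := (ENNReal.toReal_lt_toReal hRtop ENNReal.one_ne_top).mpr hR1
    simpa using this
  obtain ⟨T, q, hT1, hq0, hq1, hTRq⟩ :
      ∃ (T q : ℝ), 1 < T ∧ 0 < q ∧ q < 1 ∧
        ENNReal.ofReal T * R ≤ ENNReal.ofReal q := by
    have hρinv : 1 < (R.toReal)⁻¹ := (one_lt_inv₀ hρ0).mpr hρ1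
    have hc1 : 1 < (1 + (R.toReal)⁻¹)/2 := by linarith
    have hc2 : 0 < (1 + (R.toReal)⁻¹)/2 * R.toReal := by positivity
    have hc3 : (1 + (R.toReal)⁻¹)/2 * R.toReal < 1 := by
      have h2 : (1 + (R.toReal)⁻¹)/2 < (R.toReal)⁻¹ := by linarith
      have h4 := mul_lt_mul_of_pos_right h2 hρ0
      rwa [inv_mul_cancel₀ (ne_of_gt hρ0)] at h4
    have hc4 : ENNReal.ofReal ((1 + (R.toReal)⁻¹)/2) * R
        ≤ ENNReal.ofReal ((1 + (R.toReal)⁻¹)/2 * R.toReal) := by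
      rw [ENNReal.ofReal_mul (by linarith), ENNReal.ofReal_toReal hRtop]
    exact ⟨(1 + (R.toReal)⁻¹)/2, (1 + (R.toReal)⁻¹)/2 * R.toReal, hc1, hc2, hc3, hc4⟩
  have hT0 : (0:ℝ) ≤ T := by linarith
  -- the dominating point w = q • zt
  set w : I → ℝ≥0∞ := fun a => ENNReal.ofReal q * zt a with hwdef
  have hwP : w ∈ P := by
    refine Pdown zt w (fun a => ?_) hztP
    calc ENNReal.ofReal q * zt a ≤ 1 * zt a :=
          mul_le_mul_left (ENNReal.ofReal_le_one.mpr hq1.le) _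
      _ = zt a := one_mul _
  have hwfin : ∀ a, w a ≠ ⊤ :=
    fun a => ENNReal.mul_ne_top ENNReal.ofReal_ne_top (hfin zt hztP a)
  have hdfin : ∀ a, y a - x a ≠ ⊤ :=
    fun a => ne_top_of_le_ne_top (hfin y hy a) tsub_le_self
  have hrq : r ≤ ENNReal.ofReal q := by
    calc r ≤ R := le_max_left _ _
      _ = 1 * R := (one_mul _).symm
      _ ≤ ENNReal.ofReal T * R := by
          refine mul_le_mul_left ?_ _
          rw [show (1:ℝ≥0∞) = ENNReal.ofReal 1 from ENNReal.ofReal_one.symm]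
          exact ENNReal.ofReal_le_ofReal hT1.le
      _ ≤ ENNReal.ofReal q := hTRq
  have hdw : ∀ a, y a - x a ≤ w a := by
    intro a
    calc y a - x a ≤ y a := tsub_le_self
      _ = r * zt a := hyr a
      _ ≤ ENNReal.ofReal q * zt a := mul_le_mul_left hrq _
  -- key bound on the segment
  have hkey : ∀ θ : ℝ, θ ≤ T → ∀ a, zseg x y θ a ≤ w a := by
    intro θ hθ a
    have hxq : x a ≤ ENNReal.ofReal T * x a := by
      refine le_mul_of_one_le_left zero_le ?_
      rw [show (1:ℝ≥0∞) = ENNReal.ofReal 1 from ENNReal.ofReal_one.symm]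
      exact ENNReal.ofReal_le_ofReal hT1.le
    calc zseg x y θ a = x a + ENNReal.ofReal θ * (y a - x a) := rfl
      _ ≤ x a + ENNReal.ofReal T * (y a - x a) :=
          add_le_add_right (mul_le_mul_left (ENNReal.ofReal_le_ofReal hθ) _) _
      _ ≤ ENNReal.ofReal T * x a + ENNReal.ofReal T * (y a - x a) := add_le_add_left hxq _
      _ = ENNReal.ofReal T * (x a + (y a - x a)) := (mul_add _ _ _).symm
      _ = ENNReal.ofReal T * y a := by rw [add_tsub_cancel_of_le (hxy a)]
      _ = ENNReal.ofReal T * (r * zt a) := by rw [hyr a]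
      _ ≤ ENNReal.ofReal T * (R * zt a) :=
          mul_le_mul_right (mul_le_mul_left (le_max_left _ _) _) _
      _ = (ENNReal.ofReal T * R) * zt a := (mul_assoc _ _ _).symm
      _ ≤ ENNReal.ofReal q * zt a := mul_le_mul_left hTRq _
  have hzle : ∀ θ : ℝ, θ ≤ T → ∀ a, zseg x y θ a ≠ ⊤ :=
    fun θ hθ a => ne_top_of_le_ne_top (hwfin a) (hkey θ hθ a)
  have hsum_le : ∀ θ : ℝ, θ ≤ T → ∑' μ : Multiset I, t μ * mpow (zseg x y θ) μ ≤ 1 := by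
    intro θ hθ
    refine le_trans (ENNReal.tsum_le_tsum fun μ =>
      mul_le_mul_right (aux_mpow_mono (hkey θ hθ) μ) (t μ)) (ht w hwP)
  have part1 : ∀ θ ∈ Set.Icc (0:ℝ) 1, hseg t x y θ ∈ Set.Icc (0:ℝ) 1 := by
    intro θ hθ
    constructor
    · exact ENNReal.toReal_nonneg
    · have h2 := ENNReal.toReal_mono ENNReal.one_ne_top (hsum_le θ (hθ.2.trans hT1.le))
      simpa [hseg] using h2
  -- real-valued data
  set Xr : I → ℝ := fun a => (x a).toReal with hXrdef
  set Dr : I → ℝ := fun a => (y a - x a).toReal with hDrdef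
  set Wr : I → ℝ := fun a => (w a).toReal with hWrdef
  have hzre : ∀ θ' : ℝ, 0 ≤ θ' → ∀ b, (zseg x y θ' b).toReal = Xr b + θ' * Dr b := by
    intro θ' hθ' b
    show (x b + ENNReal.ofReal θ' * (y b - x b)).toReal = _
    rw [ENNReal.toReal_add (hfin x hx b) (ENNReal.mul_ne_top ENNReal.ofReal_ne_top (hdfin b)),
      ENNReal.toReal_mul, ENNReal.toReal_ofReal hθ']
  have hmre : ∀ θ' : ℝ, 0 ≤ θ' → θ' ≤ T → ∀ ν : Multiset I,
      (mpow (zseg x y θ') ν).toReal = (ν.map fun b => Xr b + θ' * Dr b).prod := by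
    intro θ' h0 hT ν
    rw [aux_mpow_toReal (hzle θ' hT) ν]
    exact congrArg Multiset.prod (Multiset.map_congr rfl fun b _ => hzre θ' h0 b)
  -- summable bound
  obtain ⟨q', hqq', hq'1⟩ : ∃ q' : ℝ, q < q' ∧ q' < 1 := ⟨(1+q)/2, by linarith, by linarith⟩
  have hq'0 : 0 < q' := hq0.trans hqq'
  set w' : I → ℝ≥0∞ := fun a => ENNReal.ofReal q' * zt a with hw'def
  have hw'P : w' ∈ P := by
    refine Pdown zt w' (fun a => ?_) hztP
    calc ENNReal.ofReal q' * zt a ≤ 1 * zt a :=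
          mul_le_mul_left (ENNReal.ofReal_le_one.mpr hq'1.le) _
      _ = zt a := one_mul _
  have hsummable : Summable (fun n : ℕ => (n:ℝ)^1 * (q/q')^n) := by
    refine summable_pow_mul_geometric_of_norm_lt_one 1 ?_
    rw [Real.norm_eq_abs, abs_of_nonneg (by positivity)]
    exact (div_lt_one hq'0).mpr hqq'
  have hC0nn : (0:ℝ) ≤ ∑' n : ℕ, (n:ℝ)^1 * (q/q')^n := tsum_nonneg fun n => by positivity
  have hC0 : ∀ n : ℕ, (n:ℝ) * q^n ≤ (∑' n : ℕ, (n:ℝ)^1 * (q/q')^n) * q'^n := by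
    intro n
    have h1 : (n:ℝ)^1 * (q/q')^n ≤ ∑' n : ℕ, (n:ℝ)^1 * (q/q')^n :=
      Summable.le_tsum hsummable n (fun j _ => by positivity)
    have h2 : (n:ℝ) * q^n = ((n:ℝ)^1 * (q/q')^n) * q'^n := by
      have h3 : (q/q') * q' = q := div_mul_cancel₀ q (ne_of_gt hq'0)
      calc (n:ℝ) * q^n = (n:ℝ) * ((q/q') * q')^n := by rw [h3]
        _ = ((n:ℝ)^1 * (q/q')^n) * q'^n := by rw [mul_pow, pow_one, mul_assoc]
    rw [h2]
    exact mul_le_mul_of_nonneg_right h1 (by positivity)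
  have hcard : ∀ μ : Multiset I, (Multiset.card μ : ℝ≥0∞) * mpow w μ
      ≤ ENNReal.ofReal (∑' n : ℕ, (n:ℝ)^1 * (q/q')^n) * mpow w' μ := by
    intro μ
    have h1 : mpow w μ = ENNReal.ofReal q ^ (Multiset.card μ) * mpow zt μ := by
      rw [hwdef]; exact aux_mpow_smul _ _ _
    have h2 : mpow w' μ = ENNReal.ofReal q' ^ (Multiset.card μ) * mpow zt μ := by
      rw [hw'def]; exact aux_mpow_smul _ _ _
    rw [h1, h2]
    have h3 : (Multiset.card μ : ℝ≥0∞) * ENNReal.ofReal q ^ (Multiset.card μ)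
        ≤ ENNReal.ofReal (∑' n : ℕ, (n:ℝ)^1 * (q/q')^n)
          * ENNReal.ofReal q' ^ (Multiset.card μ) := by
      rw [← ENNReal.ofReal_pow hq0.le, ← ENNReal.ofReal_pow hq'0.le,
        ← ENNReal.ofReal_natCast (Multiset.card μ), ← ENNReal.ofReal_mul (by positivity),
        ← ENNReal.ofReal_mul hC0nn]
      exact ENNReal.ofReal_le_ofReal (hC0 (Multiset.card μ))
    calc (Multiset.card μ : ℝ≥0∞) * (ENNReal.ofReal q ^ (Multiset.card μ) * mpow zt μ)
        = ((Multiset.card μ : ℝ≥0∞) * ENNReal.ofReal q ^ (Multiset.card μ)) * mpow zt μ :=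
          (mul_assoc _ _ _).symm
      _ ≤ (ENNReal.ofReal (∑' n : ℕ, (n:ℝ)^1 * (q/q')^n)
            * ENNReal.ofReal q' ^ (Multiset.card μ)) * mpow zt μ := mul_le_mul_left h3 _
      _ = ENNReal.ofReal (∑' n : ℕ, (n:ℝ)^1 * (q/q')^n)
            * (ENNReal.ofReal q' ^ (Multiset.card μ) * mpow zt μ) := mul_assoc _ _ _
  have hS' : ∑' μ : Multiset I, t μ * (Multiset.card μ : ℝ≥0∞) * mpow w μ
      ≤ ENNReal.ofReal (∑' n : ℕ, (n:ℝ)^1 * (q/q')^n) := by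
    calc ∑' μ : Multiset I, t μ * (Multiset.card μ : ℝ≥0∞) * mpow w μ
        ≤ ∑' μ : Multiset I, ENNReal.ofReal (∑' n : ℕ, (n:ℝ)^1 * (q/q')^n)
            * (t μ * mpow w' μ) := by
          refine ENNReal.tsum_le_tsum fun μ => ?_
          calc t μ * (Multiset.card μ : ℝ≥0∞) * mpow w μ
              = t μ * ((Multiset.card μ : ℝ≥0∞) * mpow w μ) := by ring
            _ ≤ t μ * (ENNReal.ofReal (∑' n : ℕ, (n:ℝ)^1 * (q/q')^n) * mpow w' μ) :=
                mul_le_mul_right (hcard μ) _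
            _ = ENNReal.ofReal (∑' n : ℕ, (n:ℝ)^1 * (q/q')^n) * (t μ * mpow w' μ) := by ring
      _ = ENNReal.ofReal (∑' n : ℕ, (n:ℝ)^1 * (q/q')^n)
            * ∑' μ : Multiset I, t μ * mpow w' μ := ENNReal.tsum_mul_left
      _ ≤ ENNReal.ofReal (∑' n : ℕ, (n:ℝ)^1 * (q/q')^n) * 1 :=
          mul_le_mul_right (ht w' hw'P) _
      _ = ENNReal.ofReal (∑' n : ℕ, (n:ℝ)^1 * (q/q')^n) := mul_one _
  have hu : Summable (fun μ : Multiset I =>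
      (t μ * (Multiset.card μ : ℝ≥0∞) * mpow w μ).toReal) :=
    ENNReal.summable_toReal (ne_top_of_le_ne_top ENNReal.ofReal_ne_top hS')
  -- derivatives of the terms
  have hfderiv : ∀ (μ : Multiset I) (θ' : ℝ), θ' ∈ Set.Ioo (-1:ℝ) T →
      HasDerivAt (auxF t Xr Dr μ) (auxF' t Xr Dr μ θ') θ' := by
    intro μ θ' _
    exact HasDerivAt.const_mul ((t μ).toReal) (aux_hasDerivAt_mprod Xr Dr μ θ')
  -- bound on the derivatives
  have hXW : ∀ θ' : ℝ, θ' ∈ Set.Ioo (-1:ℝ) T → ∀ b, |Xr b + θ' * Dr b| ≤ Wr b := by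
    intro θ' hθ' b
    have habs : |θ'| ≤ T := abs_le.mpr ⟨by linarith [hθ'.1], hθ'.2.le⟩
    have hWb : (x b + ENNReal.ofReal T * (y b - x b)).toReal ≤ Wr b :=
      ENNReal.toReal_mono (hwfin b) (hkey T le_rfl b)
    rw [ENNReal.toReal_add (hfin x hx b) (ENNReal.mul_ne_top ENNReal.ofReal_ne_top (hdfin b)),
      ENNReal.toReal_mul, ENNReal.toReal_ofReal hT0] at hWb
    have hDnn : (0:ℝ) ≤ Dr b := ENNReal.toReal_nonneg
    have h1 : |Xr b + θ' * Dr b| ≤ Xr b + |θ'| * Dr b := by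
      refine (abs_add_le _ _).trans ?_
      rw [abs_of_nonneg (ENNReal.toReal_nonneg : (0:ℝ) ≤ Xr b), abs_mul,
        abs_of_nonneg hDnn]
    refine h1.trans (le_trans ?_ hWb)
    have h2 := mul_le_mul_of_nonneg_right habs hDnn
    linarith
  have hDW : ∀ b, Dr b ≤ Wr b := fun b => ENNReal.toReal_mono (hwfin b) (hdw b)
  have hbound : ∀ (μ : Multiset I), ∀ θ' ∈ Set.Ioo (-1:ℝ) T,
      ‖auxF' t Xr Dr μ θ'‖ ≤ (t μ * (Multiset.card μ : ℝ≥0∞) * mpow w μ).toReal := by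
    intro μ θ' hθ'
    rw [Real.norm_eq_abs]
    rw [show auxF' t Xr Dr μ θ'
        = (t μ).toReal * (μ.map fun a =>
            Dr a * ((μ.erase a).map fun b => Xr b + θ' * Dr b).prod).sum from rfl]
    rw [abs_mul, abs_of_nonneg (ENNReal.toReal_nonneg : (0:ℝ) ≤ (t μ).toReal)]
    have hterm : ∀ a ∈ μ, |Dr a * ((μ.erase a).map fun b => Xr b + θ' * Dr b).prod|
        ≤ (mpow w μ).toReal := by
      intro a ha
      rw [abs_mul, abs_of_nonneg (ENNReal.toReal_nonneg : (0:ℝ) ≤ Dr a)]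
      have hp1 : |((μ.erase a).map fun b => Xr b + θ' * Dr b).prod|
          ≤ ((μ.erase a).map Wr).prod :=
        aux_abs_mprod_le _ _ _ (fun b _ => hXW θ' hθ' b)
      calc Dr a * |((μ.erase a).map fun b => Xr b + θ' * Dr b).prod|
          ≤ Wr a * ((μ.erase a).map Wr).prod :=
            mul_le_mul (hDW a) hp1 (abs_nonneg _) ENNReal.toReal_nonneg
        _ = ((a ::ₘ μ.erase a).map Wr).prod := by
            rw [Multiset.map_cons, Multiset.prod_cons]
        _ = (μ.map Wr).prod := by rw [Multiset.cons_erase ha]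
        _ = (mpow w μ).toReal := (aux_mpow_toReal hwfin μ).symm
    have h2 := aux_abs_msum_le μ
      (fun a => Dr a * ((μ.erase a).map fun b => Xr b + θ' * Dr b).prod)
      (fun _ => (mpow w μ).toReal) hterm
    have h3 : (μ.map fun _ : I => (mpow w μ).toReal).sum
        = (Multiset.card μ : ℝ) * (mpow w μ).toReal := by
      rw [Multiset.map_const', Multiset.sum_replicate, nsmul_eq_mul]
    rw [h3] at h2
    have h4 := mul_le_mul_of_nonneg_left h2 (ENNReal.toReal_nonneg : (0:ℝ) ≤ (t μ).toReal)
    refine h4.trans (le_of_eq ?_)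
    rw [ENNReal.toReal_mul, ENNReal.toReal_mul, ENNReal.toReal_natCast]
    ring
  -- summability at 0
  have h0sum : Summable (fun μ : Multiset I => auxF t Xr Dr μ 0) := by
    have hx1 : Summable (fun μ : Multiset I => (t μ * mpow x μ).toReal) :=
      ENNReal.summable_toReal (ne_top_of_le_ne_top ENNReal.one_ne_top (ht x hx))
    refine hx1.congr fun μ => ?_
    rw [show auxF t Xr Dr μ 0
        = (t μ).toReal * (μ.map fun a => Xr a + 0 * Dr a).prod from rfl]
    rw [ENNReal.toReal_mul, aux_mpow_toReal (hfin x hx) μ]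
    congr 1
    refine congrArg Multiset.prod (Multiset.map_congr rfl fun a _ => ?_)
    simp [hXrdef]
  have hmem0 : (0:ℝ) ∈ Set.Ioo (-1:ℝ) T := ⟨by norm_num, by linarith⟩
  have hIccIoo : Set.Icc (0:ℝ) 1 ⊆ Set.Ioo (-1:ℝ) T := by
    intro θ hθ
    exact ⟨by linarith [hθ.1], by linarith [hθ.2]⟩
  have HDA : ∀ θ ∈ Set.Icc (0:ℝ) 1,
      HasDerivAt (fun θ' => ∑' μ : Multiset I, auxF t Xr Dr μ θ')
        (∑' μ : Multiset I, auxF' t Xr Dr μ θ) θ := by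
    intro θ hθ
    exact hasDerivAt_tsum_of_isPreconnected hu isOpen_Ioo isPreconnected_Ioo
      hfderiv hbound hmem0 h0sum (hIccIoo hθ)
  -- h agrees with the real series on [0,1]
  have Heq : ∀ θ' ∈ Set.Icc (0:ℝ) 1,
      hseg t x y θ' = ∑' μ : Multiset I, auxF t Xr Dr μ θ' := by
    intro θ' hθ'
    have hθT : θ' ≤ T := hθ'.2.trans hT1.le
    unfold hseg
    rw [ENNReal.tsum_toReal_eq (fun μ =>
      ENNReal.mul_ne_top (htfin μ) (aux_mpow_ne_top (hzle θ' hθT) μ))]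
    refine tsum_congr fun μ => ?_
    rw [show auxF t Xr Dr μ θ'
        = (t μ).toReal * (μ.map fun a => Xr a + θ' * Dr a).prod from rfl]
    rw [ENNReal.toReal_mul, hmre θ' hθ'.1 hθT μ]
  -- conclusion
  refine ⟨part1, fun θ hθ => ?_⟩
  have hθT : θ ≤ T := hθ.2.trans hT1.le
  -- identify the value of the derivative
  have hGfin : ∀ μ : Multiset I, ∀ a ∈ μ,
      (y a - x a) * mpow (zseg x y θ) (μ.erase a) ≠ ⊤ :=
    fun μ a _ => ENNReal.mul_ne_top (hdfin a) (aux_mpow_ne_top (hzle θ hθT) _)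
  have hGle : ∀ μ : Multiset I,
      t μ * (μ.map fun a => (y a - x a) * mpow (zseg x y θ) (μ.erase a)).sum
      ≤ t μ * (Multiset.card μ : ℝ≥0∞) * mpow w μ := by
    intro μ
    have hsum : (μ.map fun a => (y a - x a) * mpow (zseg x y θ) (μ.erase a)).sum
        ≤ (Multiset.card μ : ℝ≥0∞) * mpow w μ := by
      have h5 := Multiset.sum_le_card_nsmul
        (μ.map fun a => (y a - x a) * mpow (zseg x y θ) (μ.erase a)) (mpow w μ) ?_
      · rwa [Multiset.card_map, nsmul_eq_mul] at h5
      · intro v hv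
        obtain ⟨a, ha, rfl⟩ := Multiset.mem_map.mp hv
        calc (y a - x a) * mpow (zseg x y θ) (μ.erase a)
            ≤ w a * mpow w (μ.erase a) :=
              mul_le_mul' (hdw a) (aux_mpow_mono (hkey θ hθT) _)
          _ = mpow w (a ::ₘ μ.erase a) := (aux_mpow_cons w a _).symm
          _ = mpow w μ := by rw [Multiset.cons_erase ha]
    calc t μ * (μ.map fun a => (y a - x a) * mpow (zseg x y θ) (μ.erase a)).sum
        ≤ t μ * ((Multiset.card μ : ℝ≥0∞) * mpow w μ) := mul_le_mul_right hsum _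
      _ = t μ * (Multiset.card μ : ℝ≥0∞) * mpow w μ := (mul_assoc _ _ _).symm
  have hf'g : ∀ μ : Multiset I, auxF' t Xr Dr μ θ
      = (t μ * (μ.map fun a => (y a - x a) * mpow (zseg x y θ) (μ.erase a)).sum).toReal := by
    intro μ
    rw [ENNReal.toReal_mul, aux_msum_toReal (hGfin μ)]
    rw [show auxF' t Xr Dr μ θ
        = (t μ).toReal * (μ.map fun a =>
            Dr a * ((μ.erase a).map fun b => Xr b + θ * Dr b).prod).sum from rfl]
    congr 1
    refine congrArg Multiset.sum (Multiset.map_congr rfl fun a _ => ?_)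
    rw [ENNReal.toReal_mul, hmre θ hθ.1 hθT (μ.erase a)]
  have Hval : (∑' μ : Multiset I, auxF' t Xr Dr μ θ)
      = (∑' a : I, matDeriv1 t (zseg x y θ) a * (y a - x a)).toReal := by
    have e1 : (∑' μ : Multiset I, auxF' t Xr Dr μ θ)
        = (∑' μ : Multiset I, t μ * (μ.map fun a =>
            (y a - x a) * mpow (zseg x y θ) (μ.erase a)).sum).toReal := by
      rw [ENNReal.tsum_toReal_eq (fun μ =>
        ENNReal.mul_ne_top (htfin μ) (aux_msum_ne_top (hGfin μ)))]
      exact tsum_congr hf'g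
    rw [e1]
    congr 1
    calc ∑' μ : Multiset I, t μ * (μ.map fun a =>
            (y a - x a) * mpow (zseg x y θ) (μ.erase a)).sum
        = ∑' μ : Multiset I, ∑' a : I, t μ * ((μ.count a : ℝ≥0∞)
            * ((y a - x a) * mpow (zseg x y θ) (μ.erase a))) := by
          refine tsum_congr fun μ => ?_
          rw [aux_msum_eq_tsum]
          exact ENNReal.tsum_mul_left.symm
      _ = ∑' a : I, ∑' μ : Multiset I, t μ * ((μ.count a : ℝ≥0∞)
            * ((y a - x a) * mpow (zseg x y θ) (μ.erase a))) := ENNReal.tsum_comm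
      _ = ∑' a : I, matDeriv1 t (zseg x y θ) a * (y a - x a) := by
          refine tsum_congr fun a => ?_
          have hinj : Function.Injective (fun ν : Multiset I => ν + {a}) :=
            fun ν1 ν2 h12 => add_right_cancel h12
          have hsupp : Function.support (fun μ : Multiset I => t μ * ((μ.count a : ℝ≥0∞)
              * ((y a - x a) * mpow (zseg x y θ) (μ.erase a))))
              ⊆ Set.range (fun ν : Multiset I => ν + {a}) := by
            intro μ hμ
            by_contra hμr
            have haμ : a ∉ μ := by
              intro haμ
              exact hμr ⟨μ.erase a, by
                show μ.erase a + {a} = μ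
                rw [add_comm, Multiset.singleton_add, Multiset.cons_erase haμ]⟩
            apply hμ
            show t μ * ((μ.count a : ℝ≥0∞)
              * ((y a - x a) * mpow (zseg x y θ) (μ.erase a))) = 0
            rw [Multiset.count_eq_zero_of_notMem haμ]
            simp
          have hre := hinj.tsum_eq hsupp
          rw [← hre]
          rw [show matDeriv1 t (zseg x y θ) a = ∑' ν : Multiset I,
            ((ν.count a : ℝ≥0∞) + 1) * t (ν + {a}) * mpow (zseg x y θ) ν from rfl,
            ← ENNReal.tsum_mul_right]
          refine tsum_congr fun ν => ?_
          have h1 : (ν + {a}).count a = ν.count a + 1 := by simp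
          have h2 : (ν + {a}).erase a = ν := by
            rw [add_comm, Multiset.singleton_add, Multiset.erase_cons_head]
          simp only [h1, h2]
          push_cast
          ring
  have H := (HDA θ hθ).hasDerivWithinAt (s := Set.Icc (0:ℝ) 1)
  rw [Hval] at H
  exact H.congr Heq (Heq θ hθ)
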